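/- Let (A, φ, φ') be an infinitesimal noncommutative probability space and let A_1, ..., A_k be unital subalgebras of A that are infinitesimally free in (A, φ, φ'). Suppose that for every 1 ≤ i ≤ k the restrictions φ|A_i and φ'|A_i are traces, i.e., φ(ab) = φ(ba) and φ'(ab) = φ'(ba) for all a, b ∈ A_i. Then φ and φ' are traces on the unital subalgebra of A generated by A_1 ∪ ⋯ ∪ A_k: for all x, y in that subalgebra, φ(xy) = φ(yx) and φ'(xy) = φ'(yx). -/

import Mathlib

namespace InfFree

open scoped BigOperators

/-- `π` is a partition of `Fin n` into nonempty blocks. -/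
def IsPartition {n : ℕ} (π : Finset (Finset (Fin n))) : Prop :=
  (∀ V ∈ π, V.Nonempty) ∧ ∀ i : Fin n, ∃! V : Finset (Fin n), V ∈ π ∧ i ∈ V

/-- `π` is non-crossing: there are no `p < q < r < s` with `p, r` in one block and
`q, s` in another block. -/
def IsNonCrossing {n : ℕ} (π : Finset (Finset (Fin n))) : Prop :=
  ∀ p q r s : Fin n, p < q → q < r → r < s →
    ∀ V ∈ π, ∀ W ∈ π, p ∈ V → r ∈ V → q ∈ W → s ∈ W → V = W

open Classical in
/-- The finset `NC n` of non-crossing partitions of `Fin n`. -/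
noncomputable def NC (n : ℕ) : Finset (Finset (Finset (Fin n))) :=
  Finset.univ.filter fun π => IsPartition π ∧ IsNonCrossing π

/-- Restriction of an `n`-tuple to a subset `V ⊆ Fin n`, listed in increasing order. -/
def restrict {α : Type*} {n : ℕ} (a : Fin n → α) (V : Finset (Fin n)) :
    Fin V.card → α :=
  fun i => a (V.orderIsoOfFin rfl i).1

/-- `κ` is the family of `R`-valued non-crossing cumulant functionals of `φ`, i.e.
the moment-cumulant formulas hold. -/
def MomentCumulant {A : Type*} [Ring A] {R : Type*} [CommRing R]
    (φ : A → R) (κ : ∀ n : ℕ, (Fin n → A) → R) : Prop :=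
  ∀ (n : ℕ), 1 ≤ n → ∀ a : Fin n → A,
    φ (List.ofFn a).prod = ∑ π ∈ NC n, ∏ V ∈ π, κ V.card (restrict a V)

/-- `κ'` is the family of infinitesimal non-crossing cumulant functionals of
`(φ, φ')`, where `κ` is the family of non-crossing cumulant functionals of `φ`. -/
def InfMomentCumulant {A : Type*} [Ring A]
    (φ' : A → ℂ) (κ κ' : ∀ n : ℕ, (Fin n → A) → ℂ) : Prop :=
  ∀ (n : ℕ), 1 ≤ n → ∀ a : Fin n → A,
    φ' (List.ofFn a).prod =
      ∑ π ∈ NC n, ∑ V ∈ π,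
        κ' V.card (restrict a V) * ∏ W ∈ π.erase V, κ W.card (restrict a W)

/-- Consecutive indices are distinct. -/
def Alternating {n k : ℕ} (i : Fin n → Fin k) : Prop :=
  ∀ (m : ℕ) (h : m + 1 < n), i ⟨m, Nat.lt_of_succ_lt h⟩ ≠ i ⟨m + 1, h⟩

/-- Freeness of the family of subsets `S` with respect to `φ`. -/
def FreeSets {A : Type*} [Ring A] {k : ℕ} (φ : A → ℂ) (S : Fin k → Set A) : Prop :=
  ∀ (n : ℕ), 1 ≤ n → ∀ i : Fin n → Fin k, Alternating i →
    ∀ a : Fin n → A, (∀ m, a m ∈ S (i m)) → (∀ m, φ (a m) = 0) →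
      φ (List.ofFn a).prod = 0

/-- Infinitesimal freeness of the family of subsets `S` with respect to `(φ, φ')`. -/
def InfFreeSets {A : Type*} [Ring A] {k : ℕ} (φ φ' : A → ℂ) (S : Fin k → Set A) : Prop :=
  ∀ (n : ℕ) (hn : 1 ≤ n) (i : Fin n → Fin k), Alternating i →
    ∀ a : Fin n → A, (∀ m, a m ∈ S (i m)) → (∀ m, φ (a m) = 0) →
      φ (List.ofFn a).prod = 0 ∧
      ((Odd n ∧ ∀ m : Fin n, i m = i m.rev) →
        φ' (List.ofFn a).prod =
          (∏ j : Fin ((n - 1) / 2),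
              φ (a ⟨j, by have := j.isLt; omega⟩ *
                 a ⟨n - 1 - j, by have := j.isLt; omega⟩)) *
            φ' (a ⟨n / 2, by omega⟩)) ∧
      (¬(Odd n ∧ ∀ m : Fin n, i m = i m.rev) → φ' (List.ofFn a).prod = 0)

section Work
set_option linter.unusedSectionVars false
set_option maxHeartbeats 1000000




set_option linter.unusedSectionVars false

variable {A : Type*} [Ring A] [Algebra ℂ A] {k : ℕ}

def wp (l : List (A × Fin k)) : A := (l.map Prod.fst).prod
def nth (i₀ : Fin k) (l : List (A × Fin k)) (j : ℕ) : A × Fin k := l.getD j (1, i₀)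

@[simp] lemma wp_nil : wp ([] : List (A × Fin k)) = 1 := rfl
@[simp] lemma wp_cons (p : A × Fin k) (l : List (A × Fin k)) : wp (p :: l) = p.1 * wp l := by
  simp [wp]
@[simp] lemma wp_append (l₁ l₂ : List (A × Fin k)) : wp (l₁ ++ l₂) = wp l₁ * wp l₂ := by
  simp [wp]
@[simp] lemma wp_singleton (p : A × Fin k) : wp [p] = p.1 := by simp [wp]

variable {φ φ' : A →ₗ[ℂ] ℂ} {Alg : Fin k → Subalgebra ℂ A}

lemma norm_step (Alg : Fin k → Subalgebra ℂ A) :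
    ∀ l : List (A × Fin k), (∀ p ∈ l, p.1 ∈ Alg p.2) →
      ¬ List.Chain' (fun p q : A × Fin k => p.2 ≠ q.2) l →
      ∃ l' : List (A × Fin k), (∀ p ∈ l', p.1 ∈ Alg p.2) ∧ l'.length < l.length ∧ wp l' = wp l := by
  intro l
  induction l with
  | nil => exact fun _ h => absurd List.isChain_nil h
  | cons p t ih =>
    intro hmem hch
    cases t with
    | nil => exact absurd (List.isChain_singleton p) hch
    | cons q t =>
      by_cases hpq : p.2 = q.2
      · refine ⟨(p.1 * q.1, p.2) :: t, ?_, by simp, by simp [mul_assoc]⟩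
        intro r hr
        rcases List.mem_cons.mp hr with rfl | h
        · exact mul_mem (hmem p (by simp)) (by rw [hpq]; exact hmem q (by simp))
        · exact hmem r (by simp [h])
      · have hnc : ¬ List.Chain' (fun p q : A × Fin k => p.2 ≠ q.2) (q :: t) := by
          intro hc
          exact hch (List.isChain_cons_cons.mpr ⟨hpq, hc⟩)
        obtain ⟨l', h1, h2, h3⟩ := ih (fun r hr => hmem r (by simp [hr])) hnc
        refine ⟨p :: l', ?_, by simp at h2 ⊢; omega, by simp [h3]⟩
        intro r hr
        rcases List.mem_cons.mp hr with rfl | h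
        · exact hmem r (by simp)
        · exact h1 r h

lemma split_right (φ : A →ₗ[ℂ] ℂ) (t' : List (A × Fin k)) (g : A × Fin k) (x : A) (i₀ : Fin k) :
    wp (t' ++ [g]) * x
      = wp (t' ++ [(g.1 * x - φ (g.1 * x) • (1:A), i₀)]) + φ (g.1 * x) • wp t' := by
  simp only [wp_append, wp_singleton]
  rw [mul_assoc, mul_sub, mul_smul_comm, mul_one, sub_add_cancel]

lemma split_left (φ : A →ₗ[ℂ] ℂ) (f : A × Fin k) (t : List (A × Fin k)) (x : A) (i₀ : Fin k) :
    x * wp (f :: t)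
      = wp ((x * f.1 - φ (x * f.1) • (1:A), i₀) :: t) + φ (x * f.1) • wp t := by
  simp only [wp_cons]
  rw [← mul_assoc, sub_mul, smul_mul_assoc, one_mul, sub_add_cancel]

lemma cent_c (φ : A →ₗ[ℂ] ℂ) (hφ1 : φ 1 = 1) (a : A) : φ (a - φ a • (1:A)) = 0 := by
  simp [hφ1]

lemma chain_of_map_eq {l₁ l₂ : List (A × Fin k)} (h : l₁.map Prod.snd = l₂.map Prod.snd)
    (hc : List.Chain' (fun p q : A × Fin k => p.2 ≠ q.2) l₁) :
    List.Chain' (fun p q : A × Fin k => p.2 ≠ q.2) l₂ := by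
  have h₁ : List.Chain' Ne (l₁.map Prod.snd) := (List.isChain_map Prod.snd).mpr hc
  rw [h] at h₁
  exact (List.isChain_map Prod.snd).mp h₁

lemma prod_fin_congr {M M' : ℕ} (h : M = M') (F G : ℕ → ℂ) (hFG : ∀ j < M, F j = G j) :
    (∏ j : Fin M, F j) = ∏ j : Fin M', G j := by
  subst h; exact Finset.prod_congr rfl (fun j _ => hFG j j.isLt)

lemma prod_fin_peel (M : ℕ) (F : ℕ → ℂ) :
    (∏ j : Fin (M+1), F j) = F 0 * ∏ j : Fin M, F (j+1) := by
  rw [Fin.prod_univ_succ]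
  simp





variable {A : Type*} [Ring A] [Algebra ℂ A] {k : ℕ}
variable {φ φ' : A →ₗ[ℂ] ℂ} {Alg : Fin k → Subalgebra ℂ A}

lemma nth_lt (i₀ : Fin k) (l : List (A × Fin k)) {j : ℕ} (h : j < l.length) :
    nth i₀ l j = l.get ⟨j, h⟩ := by
  rw [nth, List.getD_eq_getElem l _ h, List.get_eq_getElem]

@[simp] lemma nth_cons_zero (i₀ : Fin k) (p : A × Fin k) (l : List (A × Fin k)) :
    nth i₀ (p :: l) 0 = p := rfl

@[simp] lemma nth_cons_succ (i₀ : Fin k) (p : A × Fin k) (l : List (A × Fin k)) (j : ℕ) :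
    nth i₀ (p :: l) (j + 1) = nth i₀ l j := rfl

lemma nth_append_lt (i₀ : Fin k) (l₁ l₂ : List (A × Fin k)) {j : ℕ} (h : j < l₁.length) :
    nth i₀ (l₁ ++ l₂) j = nth i₀ l₁ j := by
  rw [nth_lt i₀ _ (by simp; omega), nth_lt i₀ _ h]
  simp [List.getElem_append_left h]

lemma nth_concat_length (i₀ : Fin k) (l : List (A × Fin k)) (p : A × Fin k) :
    nth i₀ (l ++ [p]) l.length = p := by
  rw [nth_lt i₀ _ (by simp)]
  simp [List.getElem_concat_length]

variable {φ φ' : A →ₗ[ℂ] ℂ} {Alg : Fin k → Subalgebra ℂ A}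

/-- Symmetry condition of a word, in ℕ-indexed form. -/
def Symc (i₀ : Fin k) (l : List (A × Fin k)) : Prop :=
  Odd l.length ∧ ∀ m < l.length, (nth i₀ l m).2 = (nth i₀ l (l.length - 1 - m)).2

theorem free_list (hfree : InfFreeSets (⇑φ) (⇑φ') (fun i => (Alg i : Set A)))
    (i₀ : Fin k) (l : List (A × Fin k)) (hne : 1 ≤ l.length)
    (hmem : ∀ p ∈ l, p.1 ∈ Alg p.2) (hcent : ∀ p ∈ l, φ p.1 = 0)
    (hch : List.Chain' (fun p q : A × Fin k => p.2 ≠ q.2) l) :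
    φ (wp l) = 0 ∧
    (Symc i₀ l →
      φ' (wp l) =
        (∏ j ∈ Finset.range ((l.length - 1) / 2),
            φ ((nth i₀ l j).1 * (nth i₀ l (l.length - 1 - j)).1)) *
          φ' (nth i₀ l (l.length / 2)).1) ∧
    (¬ Symc i₀ l → φ' (wp l) = 0) := by
  classical
  have hofn : (List.ofFn fun m : Fin l.length => (nth i₀ l ↑m).1) = l.map Prod.fst := by
    have h1 : (fun m : Fin l.length => (nth i₀ l ↑m).1) = (Prod.fst ∘ l.get) := by
      funext m
      simp [nth_lt i₀ l m.isLt]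
    rw [h1, ← List.map_ofFn, List.ofFn_get]
  have halt : Alternating (fun m : Fin l.length => (nth i₀ l ↑m).2) := by
    intro m h
    have := List.isChain_iff_getElem.mp hch m (by omega)
    simpa [nth_lt i₀ l (show m < l.length by omega), nth_lt i₀ l (show m + 1 < l.length from h)]
      using this
  have H := hfree l.length hne (fun m : Fin l.length => (nth i₀ l ↑m).2) halt
      (fun m : Fin l.length => (nth i₀ l ↑m).1)
      (fun m => hmem _ (by rw [nth_lt i₀ l m.isLt]; exact List.get_mem _ _))
      (fun m => hcent _ (by rw [nth_lt i₀ l m.isLt]; exact List.get_mem _ _))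
  rw [hofn] at H
  have hcond : (Odd l.length ∧ ∀ m : Fin l.length,
      (nth i₀ l ↑m).2 = (nth i₀ l ↑m.rev).2) ↔ Symc i₀ l := by
    constructor
    · rintro ⟨h1, h2⟩
      refine ⟨h1, fun m hm => ?_⟩
      have := h2 ⟨m, hm⟩
      rwa [Fin.val_rev, show l.length - ((⟨m, hm⟩ : Fin l.length).1 + 1) = l.length - 1 - m
        by simp; omega] at this
    · rintro ⟨h1, h2⟩
      refine ⟨h1, fun m => ?_⟩
      have := h2 m m.isLt
      rwa [Fin.val_rev, show l.length - (↑m + 1) = l.length - 1 - ↑m by omega]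
  obtain ⟨H1, H2, H3⟩ := H
  refine ⟨H1, fun hs => (H2 (hcond.mpr hs)).trans ?_, fun hs => H3 (fun hc => hs (hcond.mp hc))⟩
  exact congrArg₂ (· * ·)
    (Fin.prod_univ_eq_prod_range
      (fun j => φ ((nth i₀ l j).1 * (nth i₀ l (l.length - 1 - j)).1)) ((l.length - 1) / 2))
    rfl

theorem base_case
    (hfree : InfFreeSets (⇑φ) (⇑φ') (fun i => (Alg i : Set A)))
    (htrace : ∀ i : Fin k, ∀ a ∈ Alg i, ∀ b ∈ Alg i,
      φ (a * b) = φ (b * a) ∧ φ' (a * b) = φ' (b * a))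
    (hφ1 : φ 1 = 1)
    (x : A) (i₀ : Fin k) (hx : x ∈ Alg i₀) (hxc : φ x = 0)
    (l : List (A × Fin k)) (hne : l ≠ [])
    (hmem : ∀ p ∈ l, p.1 ∈ Alg p.2) (hcent : ∀ p ∈ l, φ p.1 = 0)
    (hch : List.Chain' (fun p q : A × Fin k => p.2 ≠ q.2) l) :
    φ (x * wp l) = φ (wp l * x) ∧ φ' (x * wp l) = φ' (wp l * x) := by
  classical
  obtain ⟨f, t, hft⟩ : ∃ f t, l = f :: t := by
    cases l with
    | nil => exact absurd rfl hne
    | cons a b => exact ⟨a, b, rfl⟩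
  obtain ⟨t', g, htg⟩ : ∃ t' g, l = t' ++ [g] := by
    rcases List.eq_nil_or_concat l with h | ⟨L, b, h⟩
    · exact absurd h hne
    · exact ⟨L, b, by rw [h, List.concat_eq_append]⟩
  have hl1 : 1 ≤ l.length := List.length_pos_iff.mpr hne
  have hlt : t.length + 1 = l.length := by rw [hft]; simp
  have hlt' : t'.length + 1 = l.length := by rw [htg]; simp
  have hnth0 : nth i₀ l 0 = f := by rw [hft]; rfl
  have hnth_t : ∀ j : ℕ, nth i₀ l (j + 1) = nth i₀ t j := by intro j; rw [hft]; rfl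
  have hnth_t' : ∀ j, j < t'.length → nth i₀ l j = nth i₀ t' j := by
    intro j hj; rw [htg]; exact nth_append_lt i₀ t' [g] hj
  have hnthg : nth i₀ l (l.length - 1) = g := by
    rw [htg, show (t' ++ [g]).length - 1 = t'.length by simp]
    exact nth_concat_length i₀ t' g
  have hchn : ∀ m : ℕ, m + 1 < l.length → (nth i₀ l m).2 ≠ (nth i₀ l (m + 1)).2 := by
    intro m hm
    have h := List.isChain_iff_getElem.mp hch m (by omega)
    rwa [nth_lt i₀ l (show m < l.length by omega), nth_lt i₀ l hm, List.get_eq_getElem,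
      List.get_eq_getElem]
  have hfmem : f.1 ∈ Alg f.2 := hmem f (by rw [hft]; simp)
  have hgmem : g.1 ∈ Alg g.2 := hmem g (by rw [htg]; simp)
  have hfcent : φ f.1 = 0 := hcent f (by rw [hft]; simp)
  have hgcent : φ g.1 = 0 := hcent g (by rw [htg]; simp)
  have htmem : ∀ p ∈ t, p.1 ∈ Alg p.2 := fun p hp => hmem p (by rw [hft]; simp [hp])
  have htcent : ∀ p ∈ t, φ p.1 = 0 := fun p hp => hcent p (by rw [hft]; simp [hp])
  have htch : List.Chain' (fun p q : A × Fin k => p.2 ≠ q.2) t := by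
    have h := hch; rw [hft] at h; exact (List.isChain_cons.mp h).2
  have ht'mem : ∀ p ∈ t', p.1 ∈ Alg p.2 := fun p hp => hmem p (by rw [htg]; simp [hp])
  have ht'cent : ∀ p ∈ t', φ p.1 = 0 := fun p hp => hcent p (by rw [htg]; simp [hp])
  have ht'ch : List.Chain' (fun p q : A × Fin k => p.2 ≠ q.2) t' := by
    have h := hch; rw [htg] at h; exact (List.isChain_append.mp h).1
  by_cases hone : l.length = 1 ∧ f.2 = i₀
  · obtain ⟨h1len, hf2⟩ := hone
    have ht0 : t = [] := by rw [← List.length_eq_zero_iff]; omega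
    have hlf : l = [f] := by rw [hft, ht0]
    have hfm : f.1 ∈ Alg i₀ := hf2 ▸ hfmem
    rw [hlf, wp_singleton]
    exact htrace i₀ x hx f.1 hfm
  · by_cases h1 : f.2 = i₀ <;> by_cases h2 : g.2 = i₀
    · -- CASE (=,=) : h1 : f.2 = i₀, h2 : g.2 = i₀
      have hn2 : 2 ≤ l.length := by
        rcases Nat.lt_or_ge l.length 2 with h | h
        · exact absurd ⟨by omega, h1⟩ hone
        · exact h
      have hn3 : 3 ≤ l.length := by
        by_contra hcon
        have hl2 : l.length = 2 := by omega
        have h01 := hchn 0 (by omega)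
        rw [hnth0, show (0:ℕ) + 1 = l.length - 1 by omega, hnthg] at h01
        exact h01 (h1.trans h2.symm)
      have hfm : f.1 ∈ Alg i₀ := h1 ▸ hfmem
      have hgm : g.1 ∈ Alg i₀ := h2 ▸ hgmem
      -- words W₁ = (x*f.1 - φ(x*f.1)•1, i₀) :: t and W₃ = t' ++ [(g.1*x - φ(g.1*x)•1, i₀)]
      have hW₁mem : ∀ p ∈ (x * f.1 - φ (x * f.1) • (1:A), i₀) :: t, p.1 ∈ Alg p.2 := by
        intro p hp
        rcases List.mem_cons.mp hp with rfl | hp'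
        · exact sub_mem (mul_mem hx hfm) (Subalgebra.smul_mem _ (one_mem _) _)
        · exact htmem p hp'
      have hW₁cent : ∀ p ∈ (x * f.1 - φ (x * f.1) • (1:A), i₀) :: t, φ p.1 = 0 := by
        intro p hp
        rcases List.mem_cons.mp hp with rfl | hp'
        · exact cent_c φ hφ1 _
        · exact htcent p hp'
      have hW₁ch : List.Chain' (fun p q : A × Fin k => p.2 ≠ q.2)
          ((x * f.1 - φ (x * f.1) • (1:A), i₀) :: t) :=
        chain_of_map_eq (l₁ := l) (by rw [hft]; simp [h1]) hch
      have hlen1 : ((x * f.1 - φ (x * f.1) • (1:A), i₀) :: t).length = l.length := by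
        simp only [List.length_cons]; omega
      have FL1 := free_list hfree i₀ ((x * f.1 - φ (x * f.1) • (1:A), i₀) :: t)
        (by rw [hlen1]; omega) hW₁mem hW₁cent hW₁ch
      have hW₃mem : ∀ p ∈ t' ++ [(g.1 * x - φ (g.1 * x) • (1:A), i₀)], p.1 ∈ Alg p.2 := by
        intro p hp
        rcases List.mem_append.mp hp with hp' | hp'
        · exact ht'mem p hp'
        · simp at hp'
          rw [hp']
          exact sub_mem (mul_mem hgm hx) (Subalgebra.smul_mem _ (one_mem _) _)
      have hW₃cent : ∀ p ∈ t' ++ [(g.1 * x - φ (g.1 * x) • (1:A), i₀)], φ p.1 = 0 := by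
        intro p hp
        rcases List.mem_append.mp hp with hp' | hp'
        · exact ht'cent p hp'
        · simp at hp'
          rw [hp']
          exact cent_c φ hφ1 _
      have hW₃ch : List.Chain' (fun p q : A × Fin k => p.2 ≠ q.2)
          (t' ++ [(g.1 * x - φ (g.1 * x) • (1:A), i₀)]) :=
        chain_of_map_eq (by rw [htg]; simp [h2]) hch
      have hlen3 : (t' ++ [(g.1 * x - φ (g.1 * x) • (1:A), i₀)]).length = l.length := by
        simp only [List.length_append, List.length_cons, List.length_nil]; omega
      have FL3 := free_list hfree i₀ (t' ++ [(g.1 * x - φ (g.1 * x) • (1:A), i₀)])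
        (by rw [hlen3]; omega) hW₃mem hW₃cent hW₃ch
      have FLt := free_list hfree i₀ t (by omega) htmem htcent htch
      have FLt' := free_list hfree i₀ t' (by omega) ht'mem ht'cent ht'ch
      have hsplitL : x * wp l
          = wp ((x * f.1 - φ (x * f.1) • (1:A), i₀) :: t) + φ (x * f.1) • wp t := by
        rw [hft]; exact split_left φ f t x i₀
      have hsplitR : wp l * x
          = wp (t' ++ [(g.1 * x - φ (g.1 * x) • (1:A), i₀)]) + φ (g.1 * x) • wp t' := by
        rw [htg]; exact split_right φ t' g x i₀
      -- index facts
      have hW₁l : ∀ j, 1 ≤ j → j ≤ l.length - 2 →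
          nth i₀ ((x * f.1 - φ (x * f.1) • (1:A), i₀) :: t) j = nth i₀ l j := by
        intro j hj1 hj2
        rw [show j = (j - 1) + 1 by omega, nth_cons_succ]
        exact (hnth_t (j - 1)).symm
      have hW₁e : nth i₀ ((x * f.1 - φ (x * f.1) • (1:A), i₀) :: t) (l.length - 1) = g := by
        rw [show l.length - 1 = (l.length - 2) + 1 by omega, nth_cons_succ, ← hnth_t,
          show l.length - 2 + 1 = l.length - 1 by omega, hnthg]
      have hn3l : ∀ j, j < t'.length →
          nth i₀ (t' ++ [(g.1 * x - φ (g.1 * x) • (1:A), i₀)]) j = nth i₀ l j :=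
        fun j hj => by rw [nth_append_lt i₀ t' _ hj, hnth_t' j hj]
      have hn3e : nth i₀ (t' ++ [(g.1 * x - φ (g.1 * x) • (1:A), i₀)]) t'.length
          = (g.1 * x - φ (g.1 * x) • (1:A), i₀) := nth_concat_length i₀ t' _
      -- t, t' are not symmetric
      have hnott : ¬ Symc i₀ t := by
        rintro ⟨-, hs⟩
        have h0 := hs 0 (by omega)
        have e1' : nth i₀ t 0 = nth i₀ l (0 + 1) := (hnth_t 0).symm
        have e2' : nth i₀ t (t.length - 1 - 0) = g := by
          rw [show t.length - 1 - 0 = l.length - 2 by omega, ← hnth_t,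
            show l.length - 2 + 1 = l.length - 1 by omega, hnthg]
        rw [e1', e2', h2] at h0
        exact hchn 0 (by omega) (by rw [hnth0, h1, h0])
      have hnott' : ¬ Symc i₀ t' := by
        rintro ⟨-, hs⟩
        have h0 := hs 0 (by omega)
        have e1' : nth i₀ t' 0 = f := by rw [← hnth_t' 0 (by omega), hnth0]
        have e2' : nth i₀ t' (t'.length - 1 - 0) = nth i₀ l (l.length - 2) := by
          rw [show t'.length - 1 - 0 = l.length - 2 by omega, ← hnth_t' _ (by omega)]
        rw [e1', e2', h1] at h0
        have hcl := hchn (l.length - 2) (by omega)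
        rw [show l.length - 2 + 1 = l.length - 1 by omega, hnthg, h2] at hcl
        exact hcl h0.symm
      have hidx : ∀ m, m < l.length →
          (nth i₀ ((x * f.1 - φ (x * f.1) • (1:A), i₀) :: t) m).2
          = (nth i₀ (t' ++ [(g.1 * x - φ (g.1 * x) • (1:A), i₀)]) m).2 := by
        intro m hm
        by_cases hm0 : m = 0
        · subst hm0
          rw [nth_cons_zero, hn3l 0 (by omega), hnth0]
          exact h1.symm
        · by_cases hmn : m = l.length - 1
          · subst hmn
            rw [hW₁e, show l.length - 1 = t'.length by omega, hn3e, h2]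
          · rw [hW₁l m (by omega) (by omega), hn3l m (by omega)]
      have hsymiff : Symc i₀ ((x * f.1 - φ (x * f.1) • (1:A), i₀) :: t)
          ↔ Symc i₀ (t' ++ [(g.1 * x - φ (g.1 * x) • (1:A), i₀)]) := by
        unfold Symc
        rw [hlen1, hlen3]
        constructor
        · rintro ⟨o, hs⟩
          refine ⟨o, fun m hm => ?_⟩
          rw [← hidx m hm, ← hidx _ (by omega)]
          exact hs m hm
        · rintro ⟨o, hs⟩
          refine ⟨o, fun m hm => ?_⟩
          rw [hidx m hm, hidx _ (by omega)]
          exact hs m hm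
      constructor
      · rw [hsplitL, hsplitR, map_add, map_add, map_smul, map_smul,
          FL1.1, FL3.1, FLt.1, FLt'.1]
        simp
      · rw [hsplitL, hsplitR, map_add, map_add, map_smul, map_smul,
          FLt.2.2 hnott, FLt'.2.2 hnott', smul_eq_mul, smul_eq_mul,
          mul_zero, mul_zero, add_zero, add_zero]
        by_cases hC : Symc i₀ ((x * f.1 - φ (x * f.1) • (1:A), i₀) :: t)
        · have hC3 := hsymiff.mp hC
          obtain ⟨r, hr⟩ := hC.1
          rw [hlen1] at hr
          have hrge : 1 ≤ r := by omega
          rw [FL1.2.1 hC, FL3.2.1 hC3, hlen1, hlen3]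
          rw [show (l.length - 1) / 2 = ((l.length - 1) / 2 - 1) + 1 by omega,
            Finset.prod_range_succ', Finset.prod_range_succ']
          congr 1
          · congr 1
            · apply Finset.prod_congr rfl
              intro j hj
              rw [Finset.mem_range] at hj
              rw [hW₁l (j + 1) (by omega) (by omega), hn3l (j + 1) (by omega),
                hW₁l (l.length - 1 - (j + 1)) (by omega) (by omega),
                hn3l (l.length - 1 - (j + 1)) (by omega)]
            · rw [nth_cons_zero, show l.length - 1 - 0 = l.length - 1 by omega, hW₁e,
                hn3l 0 (by omega), hnth0, show l.length - 1 = t'.length by omega, hn3e]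
              show φ ((x * f.1 - φ (x * f.1) • (1:A)) * g.1)
                = φ (f.1 * (g.1 * x - φ (g.1 * x) • (1:A)))
              have eL : (x * f.1 - φ (x * f.1) • (1:A)) * g.1
                  = x * (f.1 * g.1) - φ (x * f.1) • g.1 := by
                rw [sub_mul, smul_mul_assoc, one_mul, mul_assoc]
              have eR : f.1 * (g.1 * x - φ (g.1 * x) • (1:A))
                  = f.1 * g.1 * x - φ (g.1 * x) • f.1 := by
                rw [mul_sub, mul_smul_comm, mul_one, ← mul_assoc]
              rw [eL, eR]
              simp only [map_sub, map_smul, smul_eq_mul, hgcent, hfcent, mul_zero, sub_zero]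
              exact (htrace i₀ x hx (f.1 * g.1) (mul_mem hfm hgm)).1
          · rw [hW₁l (l.length / 2) (by omega) (by omega), hn3l (l.length / 2) (by omega)]
        · have hC3 : ¬ Symc i₀ (t' ++ [(g.1 * x - φ (g.1 * x) • (1:A), i₀)]) :=
            fun hc => hC (hsymiff.mpr hc)
          rw [FL1.2.2 hC, FL3.2.2 hC3]

    · -- CASE (=,≠) : h1 : f.2 = i₀, h2 : ¬ g.2 = i₀
      have hn2 : 2 ≤ l.length := by
        by_contra hcon
        have hl2 : l.length = 1 := by omega
        have hfg : f = g := by rw [← hnth0, ← hnthg, hl2]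
        exact h2 (hfg ▸ h1)
      have hfm : f.1 ∈ Alg i₀ := h1 ▸ hfmem
      -- word W₂ = l ++ [(x,i₀)]
      have hW2mem : ∀ p ∈ l ++ [(x, i₀)], p.1 ∈ Alg p.2 := by
        intro p hp
        rcases List.mem_append.mp hp with hp' | hp'
        · exact hmem p hp'
        · simp at hp'; rw [hp']; exact hx
      have hW2cent : ∀ p ∈ l ++ [(x, i₀)], φ p.1 = 0 := by
        intro p hp
        rcases List.mem_append.mp hp with hp' | hp'
        · exact hcent p hp'
        · simp at hp'; rw [hp']; exact hxc
      have hW2ch : List.Chain' (fun p q : A × Fin k => p.2 ≠ q.2) (l ++ [(x, i₀)]) := by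
        refine List.isChain_append.mpr ⟨hch, List.isChain_singleton _, ?_⟩
        intro y hy z hz
        rw [htg] at hy
        simp at hy hz
        rw [← hy, ← hz]
        exact h2
      have FL2 := free_list hfree i₀ (l ++ [(x, i₀)]) (by simp) hW2mem hW2cent hW2ch
      have e2 : wp (l ++ [(x, i₀)]) = wp l * x := by simp
      -- word W₁ = (x*f.1 - φ(x*f.1)•1, i₀) :: t
      have hW₁mem : ∀ p ∈ (x * f.1 - φ (x * f.1) • (1:A), i₀) :: t, p.1 ∈ Alg p.2 := by
        intro p hp
        rcases List.mem_cons.mp hp with rfl | hp'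
        · exact sub_mem (mul_mem hx hfm) (Subalgebra.smul_mem _ (one_mem _) _)
        · exact htmem p hp'
      have hW₁cent : ∀ p ∈ (x * f.1 - φ (x * f.1) • (1:A), i₀) :: t, φ p.1 = 0 := by
        intro p hp
        rcases List.mem_cons.mp hp with rfl | hp'
        · exact cent_c φ hφ1 _
        · exact htcent p hp'
      have hW₁ch : List.Chain' (fun p q : A × Fin k => p.2 ≠ q.2)
          ((x * f.1 - φ (x * f.1) • (1:A), i₀) :: t) :=
        chain_of_map_eq (l₁ := l) (by rw [hft]; simp [h1]) hch
      have hlen1 : ((x * f.1 - φ (x * f.1) • (1:A), i₀) :: t).length = l.length := by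
        simp only [List.length_cons]; omega
      have FL1 := free_list hfree i₀ ((x * f.1 - φ (x * f.1) • (1:A), i₀) :: t)
        (by rw [hlen1]; omega) hW₁mem hW₁cent hW₁ch
      have FLt := free_list hfree i₀ t (by omega) htmem htcent htch
      have hsplit : x * wp l
          = wp ((x * f.1 - φ (x * f.1) • (1:A), i₀) :: t) + φ (x * f.1) • wp t := by
        rw [hft]; exact split_left φ f t x i₀
      have hW₁e : nth i₀ ((x * f.1 - φ (x * f.1) • (1:A), i₀) :: t) (l.length - 1) = g := by
        rw [show l.length - 1 = (l.length - 2) + 1 by omega, nth_cons_succ, ← hnth_t,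
          show l.length - 2 + 1 = l.length - 1 by omega, hnthg]
      have hnotW₁ : ¬ Symc i₀ ((x * f.1 - φ (x * f.1) • (1:A), i₀) :: t) := by
        rintro ⟨-, hs⟩
        have h0 := hs 0 (by rw [hlen1]; omega)
        rw [nth_cons_zero,
          show ((x * f.1 - φ (x * f.1) • (1:A), i₀) :: t).length - 1 - 0 = l.length - 1 by
            rw [hlen1]; omega,
          hW₁e] at h0
        exact h2 h0.symm
      have hW₂l : ∀ j, j < l.length → nth i₀ (l ++ [(x, i₀)]) j = nth i₀ l j :=
        fun j hj => nth_append_lt i₀ l _ hj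
      have hW₂e : nth i₀ (l ++ [(x, i₀)]) l.length = (x, i₀) := nth_concat_length i₀ l _
      constructor
      · rw [← e2, FL2.1, hsplit, map_add, map_smul, FL1.1, FLt.1, smul_eq_mul]
        ring
      · by_cases hC : Symc i₀ (l ++ [(x, i₀)])
        · obtain ⟨r, hr⟩ := hC.1
          rw [List.length_append, List.length_cons, List.length_nil] at hr
          have hre : l.length = 2 * r := by omega
          have hrge : 1 ≤ r := by omega
          have hSymt : Symc i₀ t := by
            constructor
            · exact ⟨r - 1, by omega⟩
            · intro m hm
              have h := hC.2 (m + 1) (by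
                simp only [List.length_append, List.length_cons, List.length_nil]; omega)
              rw [hW₂l (m + 1) (by omega), hnth_t m,
                show (l ++ [(x, i₀)]).length - 1 - (m + 1) = (l.length - 2 - m) + 1 by
                  simp only [List.length_append, List.length_cons, List.length_nil]; omega,
                hW₂l _ (by omega), hnth_t] at h
              rwa [show t.length - 1 - m = l.length - 2 - m by omega]
          have hFW2 := FL2.2.1 hC
          rw [e2] at hFW2
          have hFt := FLt.2.1 hSymt
          rw [hFW2, hsplit, map_add, map_smul, FL1.2.2 hnotW₁, hFt, smul_eq_mul, zero_add]
          -- peel the W₂-product (on the RHS of the goal)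
          rw [show ((l ++ [(x, i₀)]).length - 1) / 2 = ((t.length - 1) / 2) + 1 by
              simp only [List.length_append, List.length_cons, List.length_nil]; omega,
            Finset.prod_range_succ']
          have hf0 : φ ((nth i₀ (l ++ [(x, i₀)]) 0).1 *
              (nth i₀ (l ++ [(x, i₀)]) ((l ++ [(x, i₀)]).length - 1 - 0)).1) = φ (x * f.1) := by
            rw [show (l ++ [(x, i₀)]).length - 1 - 0 = l.length by
                simp only [List.length_append, List.length_cons, List.length_nil]; omega,
              hW₂e, hW₂l 0 (by omega), hnth0]
            exact (htrace i₀ x hx f.1 hfm).1.symm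
          have htailEq : ∀ j ∈ Finset.range ((t.length - 1) / 2),
              φ ((nth i₀ (l ++ [(x, i₀)]) (j + 1)).1 *
                 (nth i₀ (l ++ [(x, i₀)]) ((l ++ [(x, i₀)]).length - 1 - (j + 1))).1)
              = φ ((nth i₀ t j).1 * (nth i₀ t (t.length - 1 - j)).1) := by
            intro j hj
            rw [Finset.mem_range] at hj
            rw [hW₂l (j + 1) (by omega), hnth_t j,
              show (l ++ [(x, i₀)]).length - 1 - (j + 1) = (l.length - 2 - j) + 1 by
                simp only [List.length_append, List.length_cons, List.length_nil]; omega,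
              hW₂l _ (by omega), hnth_t,
              show l.length - 2 - j = t.length - 1 - j by omega]
          have hmid : nth i₀ (l ++ [(x, i₀)]) ((l ++ [(x, i₀)]).length / 2)
              = nth i₀ t (t.length / 2) := by
            rw [show (l ++ [(x, i₀)]).length / 2 = (t.length / 2) + 1 by
                simp only [List.length_append, List.length_cons, List.length_nil]; omega,
              hW₂l _ (by omega), hnth_t]
          rw [Finset.prod_congr rfl htailEq, hf0, hmid]
          ring
        · have h0 := FL2.2.2 hC
          rw [e2] at h0
          have hnott : ¬ Symc i₀ t := by
            rintro ⟨ho, hs⟩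
            apply hC
            constructor
            · obtain ⟨r, hr⟩ := ho
              exact ⟨r + 1, by
                simp only [List.length_append, List.length_cons, List.length_nil]; omega⟩
            · intro m hm
              rw [List.length_append, List.length_cons, List.length_nil] at hm
              by_cases hm0 : m = 0
              · subst hm0
                rw [hW₂l 0 (by omega), hnth0,
                  show (l ++ [(x, i₀)]).length - 1 - 0 = l.length by
                    simp only [List.length_append, List.length_cons, List.length_nil]; omega,
                  hW₂e]
                exact h1
              · by_cases hmn : m = l.length
                · subst hmn
                  rw [hW₂e,
                    show (l ++ [(x, i₀)]).length - 1 - l.length = 0 by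
                      simp only [List.length_append, List.length_cons, List.length_nil]; omega,
                    hW₂l 0 (by omega), hnth0]
                  exact h1.symm
                · rw [hW₂l m (by omega), show m = (m - 1) + 1 by omega, hnth_t,
                    show (l ++ [(x, i₀)]).length - 1 - ((m - 1) + 1)
                        = (l.length - 2 - (m - 1)) + 1 by
                      simp only [List.length_append, List.length_cons, List.length_nil]; omega,
                    hW₂l _ (by omega), hnth_t]
                  have h := hs (m - 1) (by omega)
                  rwa [show t.length - 1 - (m - 1) = l.length - 2 - (m - 1) by omega] at h
          rw [h0, hsplit, map_add, map_smul, FL1.2.2 hnotW₁, FLt.2.2 hnott, smul_eq_mul]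
          ring

    · -- CASE (≠,=) : h1 : ¬ f.2 = i₀, h2 : g.2 = i₀
      have hn2 : 2 ≤ l.length := by
        by_contra hcon
        have hl2 : l.length = 1 := by omega
        have hfg : f = g := by rw [← hnth0, ← hnthg, hl2]
        exact h1 (hfg ▸ h2)
      have hgm : g.1 ∈ Alg i₀ := h2 ▸ hgmem
      have hWmem : ∀ p ∈ (x, i₀) :: l, p.1 ∈ Alg p.2 := by
        intro p hp
        rcases List.mem_cons.mp hp with rfl | hp'
        · exact hx
        · exact hmem p hp'
      have hWcent : ∀ p ∈ (x, i₀) :: l, φ p.1 = 0 := by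
        intro p hp
        rcases List.mem_cons.mp hp with rfl | hp'
        · exact hxc
        · exact hcent p hp'
      have hWch : List.Chain' (fun p q : A × Fin k => p.2 ≠ q.2) ((x, i₀) :: l) := by
        refine List.isChain_cons.mpr ⟨?_, hch⟩
        intro y hy
        rw [hft] at hy
        simp at hy
        rw [← hy]
        exact Ne.symm h1
      have FL := free_list hfree i₀ ((x, i₀) :: l) (by simp) hWmem hWcent hWch
      have e1 : wp ((x, i₀) :: l) = x * wp l := by simp
      have hW₃mem : ∀ p ∈ t' ++ [(g.1 * x - φ (g.1 * x) • (1:A), i₀)], p.1 ∈ Alg p.2 := by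
        intro p hp
        rcases List.mem_append.mp hp with hp' | hp'
        · exact ht'mem p hp'
        · simp at hp'
          rw [hp']
          exact sub_mem (mul_mem hgm hx) (Subalgebra.smul_mem _ (one_mem _) _)
      have hW₃cent : ∀ p ∈ t' ++ [(g.1 * x - φ (g.1 * x) • (1:A), i₀)], φ p.1 = 0 := by
        intro p hp
        rcases List.mem_append.mp hp with hp' | hp'
        · exact ht'cent p hp'
        · simp at hp'
          rw [hp']
          exact cent_c φ hφ1 _
      have hW₃ch : List.Chain' (fun p q : A × Fin k => p.2 ≠ q.2)
          (t' ++ [(g.1 * x - φ (g.1 * x) • (1:A), i₀)]) :=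
        chain_of_map_eq (by rw [htg]; simp [h2]) hch
      have hlen3 : (t' ++ [(g.1 * x - φ (g.1 * x) • (1:A), i₀)]).length = l.length := by
        simp only [List.length_append, List.length_cons, List.length_nil]; omega
      have FL3 := free_list hfree i₀ (t' ++ [(g.1 * x - φ (g.1 * x) • (1:A), i₀)])
        (by rw [hlen3]; omega) hW₃mem hW₃cent hW₃ch
      have FLt' := free_list hfree i₀ t' (by omega) ht'mem ht'cent ht'ch
      have hsplit : wp l * x
          = wp (t' ++ [(g.1 * x - φ (g.1 * x) • (1:A), i₀)]) + φ (g.1 * x) • wp t' := by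
        rw [htg]; exact split_right φ t' g x i₀
      have hn3 : ∀ j, j < t'.length →
          nth i₀ (t' ++ [(g.1 * x - φ (g.1 * x) • (1:A), i₀)]) j = nth i₀ l j :=
        fun j hj => by rw [nth_append_lt i₀ t' _ hj, hnth_t' j hj]
      have hn3e : nth i₀ (t' ++ [(g.1 * x - φ (g.1 * x) • (1:A), i₀)]) t'.length
          = (g.1 * x - φ (g.1 * x) • (1:A), i₀) := nth_concat_length i₀ t' _
      have hnotW₃ : ¬ Symc i₀ (t' ++ [(g.1 * x - φ (g.1 * x) • (1:A), i₀)]) := by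
        rintro ⟨-, hs⟩
        have h0 := hs 0 (by rw [hlen3]; omega)
        rw [hn3 0 (by omega), hnth0,
          show (t' ++ [(g.1 * x - φ (g.1 * x) • (1:A), i₀)]).length - 1 - 0 = t'.length by
            rw [hlen3]; omega,
          hn3e] at h0
        exact h1 h0
      constructor
      · rw [← e1, FL.1, hsplit, map_add, map_smul, FL3.1, FLt'.1, smul_eq_mul]
        ring
      · by_cases hC : Symc i₀ ((x, i₀) :: l)
        · obtain ⟨r, hr⟩ := hC.1
          rw [List.length_cons] at hr
          have hre : l.length = 2 * r := by omega
          have hrge : 1 ≤ r := by omega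
          have hSymt' : Symc i₀ t' := by
            constructor
            · exact ⟨r - 1, by omega⟩
            · intro m hm
              have h := hC.2 (m + 1) (by simp only [List.length_cons]; omega)
              rw [nth_cons_succ,
                show ((x, i₀) :: l).length - 1 - (m + 1) = (l.length - 2 - m) + 1 by
                  simp only [List.length_cons]; omega,
                nth_cons_succ, hnth_t' m (by omega), hnth_t' _ (by omega)] at h
              rwa [show t'.length - 1 - m = l.length - 2 - m by omega]
          have hFW := FL.2.1 hC
          rw [e1] at hFW
          have hFt' := FLt'.2.1 hSymt'
          rw [hFW, hsplit, map_add, map_smul, FL3.2.2 hnotW₃, hFt', smul_eq_mul, zero_add]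
          -- peel the W-product
          rw [show (((x, i₀) :: l).length - 1) / 2 = ((t'.length - 1) / 2) + 1 by
              simp only [List.length_cons]; omega,
            Finset.prod_range_succ']
          have hWn : nth i₀ ((x, i₀) :: l) (((x, i₀) :: l).length - 1 - 0) = g := by
            rw [show ((x, i₀) :: l).length - 1 - 0 = (l.length - 1) + 1 by
                simp only [List.length_cons]; omega,
              nth_cons_succ, hnthg]
          have hf0 : φ ((nth i₀ ((x, i₀) :: l) 0).1 *
              (nth i₀ ((x, i₀) :: l) (((x, i₀) :: l).length - 1 - 0)).1) = φ (g.1 * x) := by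
            rw [hWn, nth_cons_zero]
            exact (htrace i₀ x hx g.1 hgm).1
          have htailEq : ∀ j ∈ Finset.range ((t'.length - 1) / 2),
              φ ((nth i₀ ((x, i₀) :: l) (j + 1)).1 *
                 (nth i₀ ((x, i₀) :: l) (((x, i₀) :: l).length - 1 - (j + 1))).1)
              = φ ((nth i₀ t' j).1 * (nth i₀ t' (t'.length - 1 - j)).1) := by
            intro j hj
            rw [Finset.mem_range] at hj
            rw [nth_cons_succ,
              show ((x, i₀) :: l).length - 1 - (j + 1) = (l.length - 2 - j) + 1 by
                simp only [List.length_cons]; omega,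
              nth_cons_succ, hnth_t' j (by omega), hnth_t' _ (by omega),
              show l.length - 2 - j = t'.length - 1 - j by omega]
          have hmid : nth i₀ ((x, i₀) :: l) (((x, i₀) :: l).length / 2)
              = nth i₀ t' (t'.length / 2) := by
            rw [show ((x, i₀) :: l).length / 2 = (r - 1) + 1 by
                simp only [List.length_cons]; omega,
              nth_cons_succ, hnth_t' _ (by omega),
              show r - 1 = t'.length / 2 by omega]
          rw [Finset.prod_congr rfl htailEq, hf0, hmid]
          ring
        · have h0 := FL.2.2 hC
          rw [e1] at h0
          have hnott' : ¬ Symc i₀ t' := by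
            rintro ⟨ho, hs⟩
            apply hC
            constructor
            · obtain ⟨r, hr⟩ := ho
              exact ⟨r + 1, by simp only [List.length_cons]; omega⟩
            · intro m hm
              rw [List.length_cons] at hm
              by_cases hm0 : m = 0
              · subst hm0
                rw [nth_cons_zero,
                  show ((x, i₀) :: l).length - 1 - 0 = (l.length - 1) + 1 by
                    simp only [List.length_cons]; omega,
                  nth_cons_succ, hnthg]
                exact h2.symm
              · by_cases hmn : m = l.length
                · subst hmn
                  rw [show ((x, i₀) :: l).length - 1 - l.length = 0 by
                      simp only [List.length_cons]; omega,
                    nth_cons_zero,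
                    show l.length = (l.length - 1) + 1 by omega,
                    nth_cons_succ, hnthg]
                  exact h2
                · rw [show m = (m - 1) + 1 by omega, nth_cons_succ,
                    show ((x, i₀) :: l).length - 1 - ((m - 1) + 1)
                        = (l.length - 2 - (m - 1)) + 1 by
                      simp only [List.length_cons]; omega,
                    nth_cons_succ, hnth_t' _ (by omega), hnth_t' _ (by omega)]
                  have h := hs (m - 1) (by omega)
                  rwa [show t'.length - 1 - (m - 1) = l.length - 2 - (m - 1) by omega] at h
          rw [h0, hsplit, map_add, map_smul, FL3.2.2 hnotW₃, FLt'.2.2 hnott', smul_eq_mul]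
          ring

    · -- CASE (≠,≠)
      have hWmem : ∀ p ∈ (x, i₀) :: l, p.1 ∈ Alg p.2 := by
        intro p hp
        rcases List.mem_cons.mp hp with rfl | hp'
        · exact hx
        · exact hmem p hp'
      have hWcent : ∀ p ∈ (x, i₀) :: l, φ p.1 = 0 := by
        intro p hp
        rcases List.mem_cons.mp hp with rfl | hp'
        · exact hxc
        · exact hcent p hp'
      have hWch : List.Chain' (fun p q : A × Fin k => p.2 ≠ q.2) ((x, i₀) :: l) := by
        refine List.isChain_cons.mpr ⟨?_, hch⟩
        intro y hy
        rw [hft] at hy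
        simp at hy
        rw [← hy]
        exact Ne.symm h1
      have FL := free_list hfree i₀ ((x, i₀) :: l) (by simp) hWmem hWcent hWch
      have hW2mem : ∀ p ∈ l ++ [(x, i₀)], p.1 ∈ Alg p.2 := by
        intro p hp
        rcases List.mem_append.mp hp with hp' | hp'
        · exact hmem p hp'
        · simp at hp'; rw [hp']; exact hx
      have hW2cent : ∀ p ∈ l ++ [(x, i₀)], φ p.1 = 0 := by
        intro p hp
        rcases List.mem_append.mp hp with hp' | hp'
        · exact hcent p hp'
        · simp at hp'; rw [hp']; exact hxc
      have hW2ch : List.Chain' (fun p q : A × Fin k => p.2 ≠ q.2) (l ++ [(x, i₀)]) := by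
        refine List.isChain_append.mpr ⟨hch, List.isChain_singleton _, ?_⟩
        intro y hy z hz
        rw [htg] at hy
        simp at hy hz
        rw [← hy, ← hz]
        exact h2
      have FL2 := free_list hfree i₀ (l ++ [(x, i₀)]) (by simp) hW2mem hW2cent hW2ch
      have e1 : wp ((x, i₀) :: l) = x * wp l := by simp
      have e2 : wp (l ++ [(x, i₀)]) = wp l * x := by simp
      have hnotW : ¬ Symc i₀ ((x, i₀) :: l) := by
        rintro ⟨-, hs⟩
        have h0 := hs 0 (by simp)
        rw [nth_cons_zero,
          show ((x, i₀) :: l).length - 1 - 0 = (l.length - 1) + 1 by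
            simp only [List.length_cons]; omega,
          nth_cons_succ, hnthg] at h0
        exact h2 h0.symm
      have hnotW2 : ¬ Symc i₀ (l ++ [(x, i₀)]) := by
        rintro ⟨-, hs⟩
        have h0 := hs 0 (by simp only [List.length_append, List.length_cons,
          List.length_nil]; omega)
        rw [nth_append_lt i₀ l _ (show (0:ℕ) < l.length by omega), hnth0,
          show (l ++ [(x, i₀)]).length - 1 - 0 = l.length by simp,
          nth_concat_length] at h0
        exact h1 h0
      constructor
      · rw [← e1, ← e2, FL.1, FL2.1]
      · rw [← e1, ← e2, FL.2.2 hnotW, FL2.2.2 hnotW2]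

theorem key (hfree : InfFreeSets (⇑φ) (⇑φ') (fun i => (Alg i : Set A)))
    (htrace : ∀ i : Fin k, ∀ a ∈ Alg i, ∀ b ∈ Alg i,
      φ (a * b) = φ (b * a) ∧ φ' (a * b) = φ' (b * a))
    (hφ1 : φ 1 = 1) :
    ∀ N : ℕ, ∀ (x : A) (i₀ : Fin k), x ∈ Alg i₀ → ∀ l : List (A × Fin k),
      l.length ≤ N → (∀ p ∈ l, p.1 ∈ Alg p.2) →
      φ (x * wp l) = φ (wp l * x) ∧ φ' (x * wp l) = φ' (wp l * x) := by
  classical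
  intro N
  induction N with
  | zero =>
    intro x i₀ hx l hl _
    have h0 : l = [] := List.length_eq_zero_iff.mp (by omega)
    subst h0
    simp
  | succ N ih =>
    intro x i₀ hx l hl hmem
    by_cases hsh : l.length ≤ N
    · exact ih x i₀ hx l hsh hmem
    have hlen : l.length = N + 1 := by omega
    by_cases hch : List.Chain' (fun p q : A × Fin k => p.2 ≠ q.2) l
    · -- inner induction on the number of non-centered letters
      have inner : ∀ m : ℕ, ∀ (x : A) (i₀ : Fin k), x ∈ Alg i₀ →
          ∀ l : List (A × Fin k), l.length = N + 1 →
          (∀ p ∈ l, p.1 ∈ Alg p.2) →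
          List.Chain' (fun p q : A × Fin k => p.2 ≠ q.2) l →
          (l.countP fun p => decide (φ p.1 ≠ 0)) + (if φ x = 0 then 0 else 1) ≤ m →
          φ (x * wp l) = φ (wp l * x) ∧ φ' (x * wp l) = φ' (wp l * x) := by
        intro m
        induction m with
        | zero =>
          intro x i₀ hx l hlen hmem hch hcnt
          have hxc : φ x = 0 := by
            by_contra h
            rw [if_neg h] at hcnt
            omega
          rw [if_pos hxc] at hcnt
          have h0 : (l.countP fun p => decide (φ p.1 ≠ 0)) = 0 := by omega
          have hlc : ∀ p ∈ l, φ p.1 = 0 := by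
            intro p hp
            have := List.countP_eq_zero.mp h0 p hp
            simpa using this
          exact base_case hfree htrace hφ1 x i₀ hx hxc l
            (by intro h; rw [h] at hlen; simp at hlen) hmem hlc hch
        | succ m ihm =>
          intro x i₀ hx l hlen hmem hch hcnt
          by_cases hxc : φ x = 0
          · by_cases hlc : ∀ p ∈ l, φ p.1 = 0
            · exact base_case hfree htrace hφ1 x i₀ hx hxc l
                (by intro h; rw [h] at hlen; simp at hlen) hmem hlc hch
            · push_neg at hlc
              obtain ⟨p, hp, hpc⟩ := hlc
              obtain ⟨s, tl, rfl⟩ := List.append_of_mem hp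
              have hsplit : wp (s ++ p :: tl)
                  = wp (s ++ (p.1 - φ p.1 • (1:A), p.2) :: tl) + φ p.1 • wp (s ++ tl) := by
                simp only [wp_append, wp_cons]
                rw [sub_mul, smul_mul_assoc, one_mul, mul_sub, mul_smul_comm, sub_add_cancel]
              have hmem1 : ∀ q ∈ s ++ (p.1 - φ p.1 • (1:A), p.2) :: tl, q.1 ∈ Alg q.2 := by
                intro q hq
                rcases List.mem_append.mp hq with h | h
                · exact hmem q (List.mem_append_left _ h)
                · rcases List.mem_cons.mp h with rfl | h'
                  · exact sub_mem (hmem p hp) (Subalgebra.smul_mem _ (one_mem _) _)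
                  · exact hmem q (List.mem_append_right _ (List.mem_cons_of_mem _ h'))
              have hch1 : List.Chain' (fun p q : A × Fin k => p.2 ≠ q.2)
                  (s ++ (p.1 - φ p.1 • (1:A), p.2) :: tl) :=
                chain_of_map_eq (l₁ := s ++ p :: tl) (by simp) hch
              have hcnt1 : (s ++ (p.1 - φ p.1 • (1:A), p.2) :: tl).countP
                    (fun p => decide (φ p.1 ≠ 0)) + (if φ x = 0 then 0 else 1) ≤ m := by
                rw [if_pos hxc] at hcnt ⊢
                rw [List.countP_append, List.countP_cons] at hcnt ⊢
                simp only [cent_c φ hφ1 p.1] at *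
                have hp1 : (decide (φ p.1 ≠ 0)) = true := by simpa using hpc
                rw [hp1] at hcnt
                simp at hcnt ⊢
                omega
              have h1 := ihm x i₀ hx (s ++ (p.1 - φ p.1 • (1:A), p.2) :: tl)
                (by simpa using hlen) hmem1 hch1 hcnt1
              have hmem2 : ∀ q ∈ s ++ tl, q.1 ∈ Alg q.2 := by
                intro q hq
                rcases List.mem_append.mp hq with h | h
                · exact hmem q (List.mem_append_left _ h)
                · exact hmem q (List.mem_append_right _ (List.mem_cons_of_mem _ h))
              have h2 := ih x i₀ hx (s ++ tl)
                (by have := hlen; simp at this ⊢; omega) hmem2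
              constructor
              · rw [hsplit, mul_add, add_mul, mul_smul_comm, smul_mul_assoc,
                  map_add, map_add, map_smul, map_smul, h1.1, h2.1]
              · rw [hsplit, mul_add, add_mul, mul_smul_comm, smul_mul_assoc,
                  map_add, map_add, map_smul, map_smul, h1.2, h2.2]
          · have hx0 : φ (x - φ x • (1:A)) = 0 := cent_c φ hφ1 x
            have hcnt1 : (l.countP fun p => decide (φ p.1 ≠ 0))
                + (if φ (x - φ x • (1:A)) = 0 then 0 else 1) ≤ m := by
              rw [if_neg hxc] at hcnt
              rw [if_pos hx0]
              omega
            have h1 := ihm (x - φ x • (1:A)) i₀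
              (sub_mem hx (Subalgebra.smul_mem _ (one_mem _) _)) l hlen hmem hch hcnt1
            have hd : x * wp l = (x - φ x • (1:A)) * wp l + φ x • wp l := by
              rw [sub_mul, smul_mul_assoc, one_mul, sub_add_cancel]
            have hd' : wp l * x = wp l * (x - φ x • (1:A)) + φ x • wp l := by
              rw [mul_sub, mul_smul_comm, mul_one, sub_add_cancel]
            constructor
            · rw [hd, hd', map_add, map_add, map_smul, h1.1]
            · rw [hd, hd', map_add, map_add, map_smul, h1.2]
      exact inner ((l.countP fun p => decide (φ p.1 ≠ 0)) + (if φ x = 0 then 0 else 1))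
        x i₀ hx l hlen hmem hch le_rfl
    · obtain ⟨l', hm', hlen', hwp'⟩ := norm_step Alg l hmem hch
      rw [← hwp']
      exact ih x i₀ hx l' (by omega) hm'

theorem pair_comm (hfree : InfFreeSets (⇑φ) (⇑φ') (fun i => (Alg i : Set A)))
    (htrace : ∀ i : Fin k, ∀ a ∈ Alg i, ∀ b ∈ Alg i,
      φ (a * b) = φ (b * a) ∧ φ' (a * b) = φ' (b * a))
    (hφ1 : φ 1 = 1) :
    ∀ l₁ l₂ : List (A × Fin k), (∀ p ∈ l₁, p.1 ∈ Alg p.2) → (∀ p ∈ l₂, p.1 ∈ Alg p.2) →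
      φ (wp l₁ * wp l₂) = φ (wp l₂ * wp l₁) ∧ φ' (wp l₁ * wp l₂) = φ' (wp l₂ * wp l₁) := by
  intro l₁
  induction l₁ with
  | nil => intro l₂ _ _; simp
  | cons p tl ih =>
    intro l₂ hm1 hm2
    have e1 : wp (p :: tl) * wp l₂ = p.1 * wp (tl ++ l₂) := by simp [mul_assoc]
    have e2 : wp (tl ++ l₂) * p.1 = wp tl * wp (l₂ ++ [p]) := by simp [mul_assoc]
    have e3 : wp (l₂ ++ [p]) * wp tl = wp l₂ * wp (p :: tl) := by simp [mul_assoc]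
    have k1 := key hfree htrace hφ1 (tl ++ l₂).length p.1 p.2 (hm1 p (by simp))
      (tl ++ l₂) le_rfl (by
        intro q hq
        rcases List.mem_append.mp hq with h | h
        · exact hm1 q (by simp [h])
        · exact hm2 q h)
    have ih' := ih (l₂ ++ [p]) (fun q hq => hm1 q (by simp [hq])) (by
      intro q hq
      rcases List.mem_append.mp hq with h | h
      · exact hm2 q h
      · simp at h; rw [h]; exact hm1 p (by simp))
    constructor
    · rw [e1, k1.1, e2, ih'.1, e3]
    · rw [e1, k1.2, e2, ih'.2, e3]

theorem repr_closure :
    ∀ u ∈ Submonoid.closure (⋃ i, (Alg i : Set A)),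
      ∃ l : List (A × Fin k), (∀ p ∈ l, p.1 ∈ Alg p.2) ∧ wp l = u := by
  intro u hu
  induction hu using Submonoid.closure_induction with
  | mem y hy =>
    obtain ⟨i, hyi⟩ := Set.mem_iUnion.mp hy
    exact ⟨[(y, i)], by intro p hp; simp at hp; rw [hp]; exact hyi, by simp⟩
  | one => exact ⟨[], by simp, by simp⟩
  | mul y z hy hz ihy ihz =>
    obtain ⟨ly, hly, hwy⟩ := ihy
    obtain ⟨lz, hlz, hwz⟩ := ihz
    refine ⟨ly ++ lz, ?_, by simp [hwy, hwz]⟩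
    intro p hp
    rcases List.mem_append.mp hp with h | h
    · exact hly p h
    · exact hlz p h


end Work

/-- If `A_1, …, A_k` are infinitesimally free and `φ, φ'` restrict
to traces on each `A_i`, then `φ` and `φ'` are traces on the unital subalgebra
generated by `A_1 ∪ ⋯ ∪ A_k`. -/
theorem trace_on_generated_of_infinitesimallyFree
    {A : Type*} [Ring A] [Algebra ℂ A]
    (φ φ' : A →ₗ[ℂ] ℂ) (hφ1 : φ 1 = 1) (hφ'1 : φ' 1 = 0)
    {k : ℕ} (Alg : Fin k → Subalgebra ℂ A)
    (hfree : InfFreeSets (⇑φ) (⇑φ') (fun i => (Alg i : Set A)))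
    (htrace : ∀ i : Fin k, ∀ a ∈ Alg i, ∀ b ∈ Alg i,
      φ (a * b) = φ (b * a) ∧ φ' (a * b) = φ' (b * a)) :
    ∀ x ∈ Algebra.adjoin ℂ (⋃ i, (Alg i : Set A)),
      ∀ y ∈ Algebra.adjoin ℂ (⋃ i, (Alg i : Set A)),
        φ (x * y) = φ (y * x) ∧ φ' (x * y) = φ' (y * x) := by
  classical
  intro x hx y hy
  have hspan : ∀ z, z ∈ Algebra.adjoin ℂ (⋃ i, (Alg i : Set A)) →
      z ∈ Submodule.span ℂ
        ((Submonoid.closure (⋃ i, (Alg i : Set A)) : Submonoid A) : Set A) := by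
    intro z hz
    rw [← Algebra.adjoin_eq_span]
    exact (Subalgebra.mem_toSubmodule _).mpr hz
  have hx' := hspan x hx
  have hy' := hspan y hy
  clear hx hy
  have main2 : ∀ u ∈ Submonoid.closure (⋃ i, (Alg i : Set A)),
      ∀ z ∈ Submodule.span ℂ
        ((Submonoid.closure (⋃ i, (Alg i : Set A)) : Submonoid A) : Set A),
      φ (u * z) = φ (z * u) ∧ φ' (u * z) = φ' (z * u) := by
    intro u hu z hz
    induction hz using Submodule.span_induction with
    | mem v hv =>
      obtain ⟨l₁, hm1, hw1⟩ := repr_closure u hu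
      obtain ⟨l₂, hm2, hw2⟩ := repr_closure v hv
      rw [← hw1, ← hw2]
      exact pair_comm hfree htrace hφ1 l₁ l₂ hm1 hm2
    | zero => simp
    | add z₁ z₂ hz₁ hz₂ ih₁ ih₂ =>
      constructor
      · rw [mul_add, add_mul, map_add, map_add, ih₁.1, ih₂.1]
      · rw [mul_add, add_mul, map_add, map_add, ih₁.2, ih₂.2]
    | smul c z₁ hz₁ ih₁ =>
      constructor
      · rw [mul_smul_comm, smul_mul_assoc, map_smul, map_smul, ih₁.1]
      · rw [mul_smul_comm, smul_mul_assoc, map_smul, map_smul, ih₁.2]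
  induction hx' using Submodule.span_induction with
  | mem u hu => exact main2 u hu y hy'
  | zero => simp
  | add x₁ x₂ hx₁ hx₂ ih₁ ih₂ =>
    constructor
    · rw [add_mul, mul_add, map_add, map_add, ih₁.1, ih₂.1]
    · rw [add_mul, mul_add, map_add, map_add, ih₁.2, ih₂.2]
  | smul c x₁ hx₁ ih₁ =>
    constructor
    · rw [smul_mul_assoc, mul_smul_comm, map_smul, map_smul, ih₁.1]
    · rw [smul_mul_assoc, mul_smul_comm, map_smul, map_smul, ih₁.2]

end InfFree
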